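/- Fix n ≥ 1 and d ≥ 1. Suppose that every ideal J ⊆ ℂ[T_0, …, T_n] generated by finitely many homogeneous polynomials of degree ≤ d satisfies (√J)^{d^n} ⊆ J. Then for all polynomials f_1, …, f_m ∈ ℂ[t_1, …, t_n] of total degree ≤ d having no common zero in ℂ^n, there exist g_1, …, g_m ∈ ℂ[t_1, …, t_n] with Σ_j g_j f_j = 1 and deg(g_j f_j) ≤ d^n for every j. -/

import Mathlib

open MvPolynomial

namespace KollarAux

noncomputable section

variable {n : ℕ}

lemma degree_eq_sum' {k : ℕ} (t : Fin k →₀ ℕ) : t.degree = t.sum fun _ e => e := rfl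

lemma degree_eq_sum_univ {k : ℕ} (t : Fin k →₀ ℕ) : t.degree = ∑ i, t i :=
  Finset.sum_subset (Finset.subset_univ _) fun _ _ hi => Finsupp.notMem_support_iff.mp hi

lemma degree_cons {k : ℕ} (a : ℕ) (s : Fin k →₀ ℕ) :
    (Finsupp.cons a s).degree = a + s.degree := by
  rw [degree_eq_sum_univ, Fin.sum_univ_succ, Finsupp.cons_zero, degree_eq_sum_univ]
  simp [Finsupp.cons_succ]

/-- Homogenization of `f` to degree `d`, using the new variable `T 0`. -/
def homog (d : ℕ) (f : MvPolynomial (Fin n) ℂ) : MvPolynomial (Fin (n + 1)) ℂ :=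
  ∑ s ∈ f.support, monomial (Finsupp.cons (d - s.degree) s) (coeff s f)

lemma homog_isHomogeneous {d : ℕ} {f : MvPolynomial (Fin n) ℂ} (hf : f.totalDegree ≤ d) :
    (homog d f).IsHomogeneous d := by
  apply IsHomogeneous.sum
  intro s hs
  apply isHomogeneous_monomial
  have hsd : s.degree ≤ d := by
    rw [degree_eq_sum']; exact le_trans (le_totalDegree hs) hf
  rw [degree_cons]
  omega

/-- Dehomogenization: substitute `T 0 = 1`. -/
def deh : MvPolynomial (Fin (n + 1)) ℂ →ₐ[ℂ] MvPolynomial (Fin n) ℂ :=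
  aeval (Fin.cases 1 X)

lemma deh_monomial (s : Fin (n + 1) →₀ ℕ) (c : ℂ) :
    deh (monomial s c) = monomial (Finsupp.tail s) c := by
  rw [deh, aeval_monomial, monomial_eq, Finsupp.prod_pow, Finsupp.prod_pow, Fin.prod_univ_succ]
  simp [Finsupp.tail_apply, algebraMap_eq]

lemma deh_homog {d : ℕ} (f : MvPolynomial (Fin n) ℂ) : deh (homog d f) = f := by
  rw [homog, map_sum]
  simp_rw [deh_monomial, Finsupp.tail_cons]
  exact support_sum_monomial_coeff f

lemma deh_X0 : deh (X 0 : MvPolynomial (Fin (n + 1)) ℂ) = 1 := by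
  rw [deh, aeval_X]
  rfl

lemma totalDegree_deh_le (P : MvPolynomial (Fin (n + 1)) ℂ) :
    (deh P).totalDegree ≤ P.totalDegree := by
  conv_lhs => rw [← support_sum_monomial_coeff P]
  rw [map_sum]
  simp_rw [deh_monomial]
  refine (totalDegree_finset_sum _ _).trans (Finset.sup_le fun s hs => ?_)
  refine (totalDegree_monomial_le _ _).trans ?_
  have h1 : ((Finsupp.tail s).sum fun _ e => id e) = (Finsupp.tail s).degree :=
    (degree_eq_sum' _).symm
  have h2 : (Finsupp.tail s).degree ≤ s.degree := by
    rw [degree_eq_sum_univ, degree_eq_sum_univ s, Fin.sum_univ_succ]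
    simp only [Finsupp.tail_apply]
    omega
  calc ((Finsupp.tail s).sum fun _ e => id e) = (Finsupp.tail s).degree := h1
    _ ≤ s.degree := h2
    _ ≤ P.totalDegree := by rw [degree_eq_sum']; exact le_totalDegree hs

lemma eval_homog {d : ℕ} {f : MvPolynomial (Fin n) ℂ} (hf : f.totalDegree ≤ d)
    {x : Fin (n + 1) → ℂ} (hx : x 0 ≠ 0) :
    eval x (homog d f) = x 0 ^ d * eval (fun i => x i.succ / x 0) f := by
  rw [homog, map_sum, eval_eq' (fun i => x i.succ / x 0) f, Finset.mul_sum]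
  refine Finset.sum_congr rfl fun s hs => ?_
  have hsd : s.degree ≤ d := by
    rw [degree_eq_sum']; exact le_trans (le_totalDegree hs) hf
  rw [eval_monomial, Finsupp.prod_pow, Fin.prod_univ_succ, Finsupp.cons_zero]
  simp_rw [Finsupp.cons_succ, div_pow]
  rw [Finset.prod_div_distrib, Finset.prod_pow_eq_pow_sum, ← degree_eq_sum_univ,
    pow_sub₀ _ hx hsd]
  field_simp

lemma homogeneousComponent_mul_homog {e D : ℕ} {F : MvPolynomial (Fin (n + 1)) ℂ}
    (hF : F.IsHomogeneous e) (heD : e ≤ D) (c : MvPolynomial (Fin (n + 1)) ℂ) :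
    homogeneousComponent D (c * F) = homogeneousComponent (D - e) c * F := by
  conv_lhs => rw [← sum_homogeneousComponent c]
  rw [Finset.sum_mul, map_sum]
  have hterm : ∀ k, homogeneousComponent D (homogeneousComponent k c * F)
      = if k = D - e then homogeneousComponent k c * F else 0 := by
    intro k
    rw [homogeneousComponent_of_mem ((mem_homogeneousSubmodule _ _).mpr
      ((homogeneousComponent_isHomogeneous k c).mul hF))]
    by_cases hk : k = D - e
    · rw [if_pos (by omega), if_pos hk]
    · rw [if_neg (by omega), if_neg hk]
  simp_rw [hterm]
  rw [Finset.sum_ite_eq' (Finset.range (c.totalDegree + 1)) (D - e)]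
  split_ifs with h
  · rfl
  · rw [homogeneousComponent_eq_zero, zero_mul]
    simp only [Finset.mem_range, not_lt] at h
    omega

end

end KollarAux

open KollarAux in
/-- **(K2) implies (K1): Kollár's projective statement yields the effective
Nullstellensatz bound.** If every ideal of `ℂ[T₀,…,T_n]` generated by finitely
many homogeneous polynomials of degree `≤ d` contains the `dⁿ`-th power of its
radical, then any `f₁,…,f_m ∈ ℂ[t₁,…,t_n]` of total degree `≤ d` without a
common zero in `ℂⁿ` admit `g_j` with `∑ g_j f_j = 1` and `deg(g_j f_j) ≤ dⁿ`. -/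
theorem kollar_K2_implies_K1
    (n d : ℕ) (hn : 1 ≤ n) (hd : 1 ≤ d)
    (hK2 : ∀ (m : ℕ) (F : Fin m → MvPolynomial (Fin (n + 1)) ℂ),
      (∀ j, ∃ e ≤ d, (F j).IsHomogeneous e) →
      (Ideal.span (Set.range F)).radical ^ (d ^ n) ≤ Ideal.span (Set.range F)) :
    ∀ (m : ℕ) (f : Fin m → MvPolynomial (Fin n) ℂ),
      (∀ j, (f j).totalDegree ≤ d) →
      (∀ z : Fin n → ℂ, ∃ j, eval z (f j) ≠ 0) →
      ∃ g : Fin m → MvPolynomial (Fin n) ℂ,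
        (∑ j, g j * f j) = 1 ∧
        ∀ j, (g j * f j).totalDegree ≤ d ^ n := by
  intro m f hdeg hz
  have hdD : d ≤ d ^ n := by
    calc d = d ^ 1 := (pow_one d).symm
    _ ≤ d ^ n := Nat.pow_le_pow_right hd hn
  set F : Fin m → MvPolynomial (Fin (n + 1)) ℂ := fun j => homog d (f j) with hF
  have hFhom : ∀ j, (F j).IsHomogeneous d := fun j => homog_isHomogeneous (hdeg j)
  -- T₀ vanishes on the common zero locus of the homogenizations
  have hX0 : (X 0 : MvPolynomial (Fin (n + 1)) ℂ) ∈ (Ideal.span (Set.range F)).radical := by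
    rw [← vanishingIdeal_zeroLocus_eq_radical (K := ℂ), mem_vanishingIdeal_iff]
    intro x hx
    rw [aeval_X]
    by_contra h0
    obtain ⟨j, hj⟩ := hz fun i => x i.succ / x 0
    apply hj
    have hFx : eval x (F j) = 0 := hx _ (Ideal.subset_span ⟨j, rfl⟩)
    rw [hF, eval_homog (hdeg j) h0] at hFx
    exact (mul_eq_zero.mp hFx).resolve_left (pow_ne_zero _ h0)
  -- apply (K2)
  have hpow : (X 0 : MvPolynomial (Fin (n + 1)) ℂ) ^ (d ^ n) ∈ Ideal.span (Set.range F) :=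
    hK2 m F (fun j => ⟨d, le_refl d, hFhom j⟩) (Ideal.pow_mem_pow hX0 (d ^ n))
  obtain ⟨c, hc⟩ := Ideal.mem_span_range_iff_exists_fun.mp hpow
  -- extract the homogeneous component of degree dⁿ
  have key : ∑ j, homogeneousComponent (d ^ n - d) (c j) * F j
      = (X 0 : MvPolynomial (Fin (n + 1)) ℂ) ^ (d ^ n) := by
    have h1 : homogeneousComponent (d ^ n) (∑ j, c j * F j)
        = (X 0 : MvPolynomial (Fin (n + 1)) ℂ) ^ (d ^ n) := by
      rw [hc, homogeneousComponent_of_mem ((mem_homogeneousSubmodule _ _).mpr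
        (isHomogeneous_X_pow _ _)), if_pos rfl]
    rw [map_sum] at h1
    rw [← h1]
    exact Finset.sum_congr rfl fun j _ =>
      (homogeneousComponent_mul_homog (hFhom j) hdD (c j)).symm
  -- dehomogenize
  refine ⟨fun j => deh (homogeneousComponent (d ^ n - d) (c j)), ?_, ?_⟩
  · have h2 := congrArg deh key
    rw [map_sum, map_pow, deh_X0, one_pow] at h2
    simp_rw [map_mul, hF, deh_homog] at h2
    exact h2
  · intro j
    refine (totalDegree_mul _ _).trans ?_
    have h3 : (deh (homogeneousComponent (d ^ n - d) (c j))).totalDegree ≤ d ^ n - d :=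
      (totalDegree_deh_le _).trans (homogeneousComponent_isHomogeneous _ _).totalDegree_le
    have h4 := hdeg j
    exact le_trans (Nat.add_le_add h3 h4) (by omega)
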